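/- Let a, b ∈ ℂ, let k ∈ ℤ, and let r > 0. Then (1/(2πi)) ∮_{|Y|=r} exp(aY + b/Y) · Y^{−k−1} dY = ∑_{m=0}^∞ a^{m+k₊} · b^{m+k₋} / ((m+k₊)! · (m+k₋)!), where k₊ := max(k,0) and k₋ := max(−k,0). In other words, the k-th Laurent coefficient at 0 of Y ↦ exp(aY + b/Y) equals the stated convergent sum. -/

import Mathlib

open Complex
open scoped Nat

/-- Let `a b : ℂ`, `k : ℤ`, `r > 0`. The `k`-th Laurent coefficient of `Y ↦ exp(aY + b/Y)`
at `0`, computed as `(1/(2πi)) ∮_{|Y|=r} exp(aY + b/Y) Y^(−k−1) dY`, equals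
`∑_{m=0}^∞ a^(m+k₊) b^(m+k₋) / ((m+k₊)! (m+k₋)!)` where `k₊ = max(k,0)`, `k₋ = max(−k,0)`. -/
theorem statement1 (a b : ℂ) (k : ℤ) (r : ℝ) (hr : 0 < r) :
    (1 / (2 * (Real.pi : ℂ) * Complex.I)) *
      (∮ Y in C(0, r), Complex.exp (a * Y + b / Y) * Y ^ (-k - 1)) =
    ∑' m : ℕ, a ^ (m + k.toNat) * b ^ (m + (-k).toNat) /
      ((Nat.factorial (m + k.toNat) : ℂ) * (Nat.factorial (m + (-k).toNat) : ℂ)) := by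
  have hπ : (0:ℝ) < 2 * Real.pi := by positivity
  have h2πi : (2 * (Real.pi : ℂ) * Complex.I) ≠ 0 := by
    simp [Real.pi_ne_zero, Complex.I_ne_zero]
  set c : ℕ × ℕ → ℂ := fun p => a ^ p.1 * b ^ p.2 /
    ((Nat.factorial p.1 : ℂ) * (Nat.factorial p.2 : ℂ)) with hc
  set e : ℕ × ℕ → ℤ := fun p => (p.1 : ℤ) - p.2 - k - 1 with he
  -- Step 1: pointwise expansion on the circle
  have hsum : ∀ Y : ℂ, Y ≠ 0 →
      HasSum (fun p : ℕ × ℕ => c p * Y ^ (e p))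
        (Complex.exp (a * Y + b / Y) * Y ^ (-k - 1)) := by
    intro Y hY
    have hf : HasSum (fun n : ℕ => (a * Y) ^ n / n !) (Complex.exp (a * Y)) := by
      rw [Complex.exp_eq_exp_ℂ]
      exact NormedSpace.expSeries_div_hasSum_exp (a * Y)
    have hg : HasSum (fun n : ℕ => (b / Y) ^ n / n !) (Complex.exp (b / Y)) := by
      rw [Complex.exp_eq_exp_ℂ]
      exact NormedSpace.expSeries_div_hasSum_exp (b / Y)
    have hsummable : Summable
        (fun p : ℕ × ℕ => ((a * Y) ^ p.1 / p.1 !) * ((b / Y) ^ p.2 / p.2 !)) := by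
      apply Summable.of_norm
      have := (NormedSpace.norm_expSeries_div_summable (a * Y)).mul_of_nonneg
        (NormedSpace.norm_expSeries_div_summable (b / Y))
        (fun _ => norm_nonneg _) (fun _ => norm_nonneg _)
      simpa [norm_mul] using this
    have hmul := (hf.mul hg hsummable).mul_right (Y ^ (-k - 1))
    rw [Complex.exp_add]
    convert hmul using 2 with p
    · rfl
    obtain ⟨n, m⟩ := p
    have he' : e (n, m) = (n : ℤ) + (-(m : ℤ)) + (-k - 1) := by simp [he]; ring
    rw [he', zpow_add₀ hY, zpow_add₀ hY, zpow_natCast, zpow_neg, zpow_natCast]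
    simp only [hc, mul_pow, div_pow]
    field_simp
  -- Step 2: interchange integral and sum
  set F : ℕ × ℕ → ℝ → ℂ := fun p θ =>
    deriv (circleMap 0 r) θ * (c p * circleMap 0 r θ ^ (e p)) with hF
  have hne : ∀ θ : ℝ, circleMap 0 r θ ≠ 0 := fun θ => circleMap_ne_center hr.ne'
  have hFcont : ∀ p, Continuous (F p) := by
    intro p
    have hFp : F p = fun θ => (circleMap 0 r θ * Complex.I) *
        (c p * circleMap 0 r θ ^ (e p)) := by
      funext θ; simp [hF, deriv_circleMap]
    rw [hFp]
    exact ((continuous_circleMap 0 r).mul continuous_const).mul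
      (continuous_const.mul
        (((continuous_circleMap 0 r).zpow₀ (e p)) (fun θ => Or.inl (hne θ))))
  have hFnorm : ∀ p θ, ‖F p θ‖ = r * (‖c p‖ * r ^ (e p)) := by
    intro p θ
    simp only [hF, deriv_circleMap, norm_mul, norm_zpow, map_zpow₀,
      norm_circleMap_zero, Complex.norm_I, abs_of_pos hr, mul_one]
  have hnorm_sum : Summable (fun p : ℕ × ℕ => r * (‖c p‖ * r ^ (e p))) := by
    have h1 : Summable (fun n : ℕ => (‖a‖ * r) ^ n / n !) :=
      Real.summable_pow_div_factorial _
    have h2 : Summable (fun n : ℕ => (‖b‖ / r) ^ n / n !) :=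
      Real.summable_pow_div_factorial _
    have h3 := (h1.mul_of_nonneg h2 (fun n => by positivity) (fun n => by positivity)).mul_left
      (r * r ^ (-k - 1 : ℤ))
    apply h3.congr
    intro p
    obtain ⟨n, m⟩ := p
    have hre : (r : ℝ) ^ (e (n, m)) = r ^ (n : ℤ) * (r ^ (m : ℤ))⁻¹ * r ^ (-k - 1 : ℤ) := by
      rw [← zpow_neg, ← zpow_add₀ hr.ne', ← zpow_add₀ hr.ne']
      congr 1
      simp [he]; ring
    simp only [hc, hre, norm_div, norm_mul, norm_pow,
      Complex.norm_natCast, zpow_natCast]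
    field_simp
    rw [div_pow]
    field_simp
    ring
  have hFint : ∀ p, MeasureTheory.Integrable (F p)
      (MeasureTheory.volume.restrict (Set.Ioc (0:ℝ) (2 * Real.pi))) :=
    fun p => (hFcont p).integrableOn_Ioc
  have hInorm : ∀ p : ℕ × ℕ,
      (∫ θ in Set.Ioc (0:ℝ) (2 * Real.pi), ‖F p θ‖) =
        (2 * Real.pi) * (r * (‖c p‖ * r ^ (e p))) := by
    intro p
    simp only [hFnorm]
    rw [MeasureTheory.setIntegral_const]
    rw [MeasureTheory.measureReal_def, Real.volume_Ioc]
    rw [smul_eq_mul, ENNReal.toReal_ofReal (by linarith)]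
    ring_nf
  have hswap : (∫ θ in Set.Ioc (0:ℝ) (2 * Real.pi), ∑' p : ℕ × ℕ, F p θ) =
      ∑' p : ℕ × ℕ, ∫ θ in Set.Ioc (0:ℝ) (2 * Real.pi), F p θ := by
    refine (MeasureTheory.integral_tsum_of_summable_integral_norm hFint ?_).symm
    apply Summable.congr ((hnorm_sum.mul_left (2 * Real.pi)))
    intro p
    exact (hInorm p).symm
  -- Step 3: compute
  have key : (∮ Y in C(0, r), Complex.exp (a * Y + b / Y) * Y ^ (-k - 1)) =
      ∑' p : ℕ × ℕ, c p * (∮ z in C(0, r), z ^ (e p)) := by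
    have hconv : ∀ θ : ℝ,
        deriv (circleMap 0 r) θ • (Complex.exp (a * circleMap 0 r θ + b / circleMap 0 r θ) *
          circleMap 0 r θ ^ (-k - 1)) = ∑' p : ℕ × ℕ, F p θ := by
      intro θ
      rw [smul_eq_mul, ← (hsum _ (hne θ)).tsum_eq, ← tsum_mul_left]
    calc (∮ Y in C(0, r), Complex.exp (a * Y + b / Y) * Y ^ (-k - 1))
        = ∫ θ in (0:ℝ)..(2 * Real.pi), ∑' p : ℕ × ℕ, F p θ := by
          rw [circleIntegral]
          exact intervalIntegral.integral_congr (fun θ _ => hconv θ)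
      _ = ∫ θ in Set.Ioc (0:ℝ) (2 * Real.pi), ∑' p : ℕ × ℕ, F p θ := by
          rw [intervalIntegral.integral_of_le (by linarith)]
      _ = ∑' p : ℕ × ℕ, ∫ θ in Set.Ioc (0:ℝ) (2 * Real.pi), F p θ := hswap
      _ = ∑' p : ℕ × ℕ, c p * (∮ z in C(0, r), z ^ (e p)) := by
          congr 1; funext p
          rw [← intervalIntegral.integral_of_le (by linarith : (0:ℝ) ≤ 2 * Real.pi)]
          have : (∮ z in C(0, r), c p * z ^ (e p)) =
              ∫ θ in (0:ℝ)..(2 * Real.pi), F p θ := by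
            rw [circleIntegral]
            exact intervalIntegral.integral_congr (fun θ _ => by simp [hF, smul_eq_mul])
          rw [← this, circleIntegral.integral_const_mul]
  have hzpow : ∀ p : ℕ × ℕ, (∮ z in C(0, r), z ^ (e p)) =
      if e p = -1 then (2 * (Real.pi : ℂ) * Complex.I) else 0 := by
    intro p
    by_cases h : e p = -1
    · rw [if_pos h, h]
      have := circleIntegral.integral_sub_inv_of_mem_ball
        (Metric.mem_ball_self hr : (0:ℂ) ∈ Metric.ball 0 r)
      simp only [sub_zero] at this
      rw [← this]
      apply circleIntegral.integral_congr hr.le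
      intro z _
      simp [zpow_neg_one]
    · rw [if_neg h]
      have := circleIntegral.integral_sub_zpow_of_ne h (0:ℂ) (0:ℂ) r
      simpa using this
  rw [key]
  have hterm : ∀ p : ℕ × ℕ, c p * (∮ z in C(0, r), z ^ (e p)) =
      (2 * (Real.pi : ℂ) * Complex.I) *
        (if (p.1 : ℤ) - p.2 = k then c p else 0) := by
    intro p
    rw [hzpow p]
    have : e p = -1 ↔ (p.1 : ℤ) - p.2 = k := by simp only [he]; omega
    by_cases h : (p.1 : ℤ) - p.2 = k
    · rw [if_pos (this.mpr h), if_pos h]; ring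
    · rw [if_neg (fun hh => h (this.mp hh)), if_neg h]; ring
  rw [tsum_congr hterm, tsum_mul_left, ← mul_assoc, one_div, inv_mul_cancel₀ h2πi, one_mul]
  -- Step 4: reindex the diagonal sum
  set g : ℕ → ℕ × ℕ := fun m => (m + k.toNat, m + (-k).toNat) with hg
  have hginj : Function.Injective g := by
    intro m m' h
    have := congrArg Prod.fst h
    simpa [hg] using this
  have hsupp : Function.support (fun p : ℕ × ℕ => if (p.1 : ℤ) - p.2 = k then c p else 0)
      ⊆ Set.range g := by
    intro p hp
    by_cases h : (p.1 : ℤ) - p.2 = k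
    · refine ⟨p.1 - k.toNat, ?_⟩
      have h1 : p.1 - k.toNat + k.toNat = p.1 := by omega
      have h2 : p.1 - k.toNat + (-k).toNat = p.2 := by omega
      simp [hg, h1, h2]
    · simp [Function.mem_support, h] at hp
  rw [← hginj.tsum_eq hsupp]
  apply tsum_congr
  intro m
  have hcond : ((g m).1 : ℤ) - (g m).2 = k := by simp only [hg]; omega
  rw [if_pos hcond]
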